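/- Let V, V₁, …, V_r and U be operators on a finite-dimensional complex inner product space with U unitary, ‖V‖ ≤ 1, and V†V + Σ_j V_j†V_j = I. Then for every density operator ρ (positive semidefinite with trace 1), Tr(Σ_j V_j ρ V_j†) ≤ 2‖U − V‖, where ‖·‖ is the operator norm. -/

import Mathlib

open Matrix
open scoped ComplexOrder
open scoped Matrix.Norms.L2Operator

private lemma psd_trace_nonneg' {n : ℕ} {P : Matrix (Fin n) (Fin n) ℂ}
    (hP : P.PosSemidef) : 0 ≤ P.trace := by
  refine Finset.sum_nonneg fun i _ => ?_
  have h := hP.dotProduct_mulVec_nonneg (Pi.single i 1)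
  simpa [dotProduct, Pi.single_apply, apply_ite, mulVec] using h

open scoped MatrixOrder in
private lemma psd_trace_mul_nonneg' {n : ℕ} {P ρ : Matrix (Fin n) (Fin n) ℂ}
    (hP : P.PosSemidef) (hρ : ρ.PosSemidef) : 0 ≤ (P * ρ).trace := by
  have hs : (CFC.sqrt ρ).PosSemidef := (CFC.sqrt_nonneg ρ).posSemidef
  have h1 : P * ρ = P * CFC.sqrt ρ * CFC.sqrt ρ := by
    rw [mul_assoc, CFC.sqrt_mul_sqrt_self ρ hρ.nonneg]
  rw [h1, trace_mul_cycle]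
  have h3 : (CFC.sqrt ρ * P * CFC.sqrt ρ).PosSemidef := by
    have := hP.conjTranspose_mul_mul_same (CFC.sqrt ρ)
    rwa [hs.1] at this
  exact psd_trace_nonneg' h3

theorem kraus_residual_trace_le (n r : ℕ) (U V : Matrix (Fin n) (Fin n) ℂ)
    (Vj : Fin r → Matrix (Fin n) (Fin n) ℂ)
    (hU : Uᴴ * U = 1) (hUU : U * Uᴴ = 1) (hV : ‖V‖ ≤ 1)
    (hsum : Vᴴ * V + ∑ j, (Vj j)ᴴ * Vj j = 1)
    (ρ : Matrix (Fin n) (Fin n) ℂ) (hρ : ρ.PosSemidef) (htr : ρ.trace = 1) :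
    (∑ j, (Vj j * ρ * (Vj j)ᴴ).trace).re ≤ 2 * ‖U - V‖ := by
  rcases Nat.eq_zero_or_pos n with hn | hn
  · subst hn
    simp [Matrix.trace] at htr
  haveI : Nonempty (Fin n) := ⟨⟨0, hn⟩⟩
  haveI : Nontrivial (Matrix (Fin n) (Fin n) ℂ) := by
    inhabit (Fin n)
    exact ⟨0, 1, fun h => by simpa using congrFun (congrFun h default) default⟩
  set A : Matrix (Fin n) (Fin n) ℂ := 1 - Vᴴ * V with hAdef
  -- rewrite LHS
  have hsum' : ∑ j, (Vj j)ᴴ * Vj j = A := eq_sub_of_add_eq' hsum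
  have key : (∑ j, (Vj j * ρ * (Vj j)ᴴ).trace) = (A * ρ).trace := by
    calc (∑ j, (Vj j * ρ * (Vj j)ᴴ).trace)
        = ∑ j, ((Vj j)ᴴ * Vj j * ρ).trace := by
          refine Finset.sum_congr rfl fun j _ => ?_
          rw [trace_mul_cycle]
      _ = ((∑ j, (Vj j)ᴴ * Vj j) * ρ).trace := by
          rw [Finset.sum_mul, trace_sum]
      _ = (A * ρ).trace := by rw [hsum']
  -- A is Hermitian
  have hA : A.IsHermitian := by
    simp [hAdef, Matrix.IsHermitian, conjTranspose_sub, conjTranspose_mul]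
  -- norm bound
  have hUn : ‖U‖ = 1 := by
    have h := l2_opNorm_conjTranspose_mul_self U
    rw [hU, CStarRing.norm_one] at h
    nlinarith [norm_nonneg U]
  have hAeq : A = Uᴴ * (U - V) + (U - V)ᴴ * V := by
    rw [hAdef, ← hU, conjTranspose_sub]
    noncomm_ring
  have hnorm : ‖A‖ ≤ 2 * ‖U - V‖ := by
    calc ‖A‖ ≤ ‖Uᴴ * (U - V)‖ + ‖(U - V)ᴴ * V‖ := by rw [hAeq]; exact norm_add_le _ _
      _ ≤ ‖Uᴴ‖ * ‖U - V‖ + ‖(U - V)ᴴ‖ * ‖V‖ :=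
          add_le_add (l2_opNorm_mul _ _) (l2_opNorm_mul _ _)
      _ ≤ 2 * ‖U - V‖ := by
          rw [l2_opNorm_conjTranspose, l2_opNorm_conjTranspose, hUn, one_mul]
          nlinarith [norm_nonneg (U - V), norm_nonneg V]
  -- (‖A‖ : ℂ) • 1 - A is positive semidefinite
  set c : ℝ := ‖A‖ with hc
  have hP : ((c : ℂ) • 1 - A).PosSemidef := by
    refine PosSemidef.of_dotProduct_mulVec_nonneg ?_ ?_
    · have h1 : ((c : ℂ) • (1 : Matrix (Fin n) (Fin n) ℂ)).IsHermitian := by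
        simp [Matrix.IsHermitian, conjTranspose_smul, Complex.star_def, Complex.conj_ofReal]
      exact h1.sub hA
    · intro x
      have hz : star x ⬝ᵥ (((c : ℂ) • 1 - A) *ᵥ x)
          = (c : ℂ) * (star x ⬝ᵥ x) - star x ⬝ᵥ (A *ᵥ x) := by
        rw [sub_mulVec, dotProduct_sub, smul_mulVec, one_mulVec, dotProduct_smul,
          smul_eq_mul]
      set x' : EuclideanSpace ℂ (Fin n) := (WithLp.equiv 2 (Fin n → ℂ)).symm x with hx'
      have hxx : star x ⬝ᵥ x = ((‖x'‖ : ℝ) ^ 2 : ℝ) := by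
        have hi : (inner ℂ x' x' : ℂ) = star x ⬝ᵥ x := by
          rw [hx', WithLp.equiv_symm_apply, EuclideanSpace.inner_toLp_toLp, dotProduct_comm]
        rw [← hi, inner_self_eq_norm_sq_to_K]
        norm_num
      have hAx : star x ⬝ᵥ (A *ᵥ x)
          = (inner ℂ x' ((WithLp.equiv 2 (Fin n → ℂ)).symm (A *ᵥ x)) : ℂ) := by
        rw [hx', WithLp.equiv_symm_apply,
          EuclideanSpace.inner_toLp_toLp, dotProduct_comm]
      set y : EuclideanSpace ℂ (Fin n) := (WithLp.equiv 2 (Fin n → ℂ)).symm (A *ᵥ x) with hy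
      have hyb : ‖y‖ ≤ ‖A‖ * ‖x'‖ := l2_opNorm_mulVec A x'
      have hre : (star x ⬝ᵥ (A *ᵥ x)).re ≤ c * ‖x'‖ ^ 2 := by
        rw [hAx]
        calc (inner ℂ x' y : ℂ).re ≤ ‖(inner ℂ x' y : ℂ)‖ := Complex.re_le_norm _
          _ ≤ ‖x'‖ * ‖y‖ := norm_inner_le_norm _ _
          _ ≤ ‖x'‖ * (‖A‖ * ‖x'‖) := by
              exact mul_le_mul_of_nonneg_left hyb (norm_nonneg _)
          _ = c * ‖x'‖ ^ 2 := by ring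
      -- imaginary part is zero since the matrix is Hermitian
      have hM : ((c : ℂ) • 1 - A).IsHermitian := by
        have h1 : ((c : ℂ) • (1 : Matrix (Fin n) (Fin n) ℂ)).IsHermitian := by
          simp [Matrix.IsHermitian, conjTranspose_smul, Complex.star_def, Complex.conj_ofReal]
        exact h1.sub hA
      set M := (c : ℂ) • 1 - A with hMdef
      have him : star (star x ⬝ᵥ (M *ᵥ x)) = star x ⬝ᵥ (M *ᵥ x) := by
        rw [← star_dotProduct, star_mulVec, ← dotProduct_mulVec, hM.eq]
      have him0 : (star x ⬝ᵥ (M *ᵥ x)).im = 0 := by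
        rw [Complex.star_def, Complex.conj_eq_iff_im] at him
        exact him
      refine Complex.le_def.mpr ⟨?_, by simpa using him0.symm⟩
      rw [hz, hxx, ← Complex.ofReal_mul, Complex.sub_re,
        Complex.ofReal_re, Complex.zero_re]
      linarith [hre]
  -- conclude
  have h0 : 0 ≤ (((c : ℂ) • 1 - A) * ρ).trace := psd_trace_mul_nonneg' hP hρ
  have h1 : (((c : ℂ) • 1 - A) * ρ).trace = (c : ℂ) - (A * ρ).trace := by
    rw [sub_mul, smul_mul_assoc, one_mul, trace_sub, trace_smul, htr, smul_eq_mul, mul_one]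
  rw [h1] at h0
  have h2 : (A * ρ).trace.re ≤ c := by
    have := (Complex.le_def.mp h0).1
    simpa using this
  rw [key]
  exact h2.trans hnorm
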